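/- Fix an integer c ≥ 2. Define S_c(n) = ∑_{k=0}^{⌊n/c⌋} B(n − (c−1)k, n − ck) and λ_n = S_c(n) − 2·S_c(n−1) for n ≥ 1. Then λ_n = 0 for 1 ≤ n ≤ c−1, λ_c = 1, and λ_n = λ_{n−1} + λ_{n−c} for every n > c. -/

import Mathlib

/-- Bernoulli's triangle: the partial sums of binomial coefficients. -/
def bernoulli2 (n k : ℕ) : ℕ := ∑ q ∈ Finset.range (k + 1), n.choose q

/-- The sum over the path following direction (c, 1-c) from (n,n) in Bernoulli's triangle. -/
def Spath (c n : ℕ) : ℕ :=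
  ∑ k ∈ Finset.range (n / c + 1), bernoulli2 (n - (c - 1) * k) (n - c * k)

/-- λ_n(c) = S_c(n) - 2 S_c(n-1), as an integer. -/
def lambda (c n : ℕ) : ℤ := (Spath c n : ℤ) - 2 * (Spath c (n - 1) : ℤ)

/-- Auxiliary quantity: the "defect" λ_n as a natural number. -/
def Dsum (c n : ℕ) : ℕ :=
  (if c ∣ n then 1 else 0) +
    ∑ k ∈ Finset.range ((n-1)/c + 1), (n-1-(c-1)*k).choose (n - c*k)

/-- Diagonal sums of Pascal's triangle with slope c (generalized Fibonacci). -/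
def Fdiag (c m : ℕ) : ℕ := ∑ j ∈ Finset.range (m / c + 1), (m - (c-1)*j).choose j

lemma bern_pascal (m j : ℕ) :
    bernoulli2 (m+1) (j+1) = 2 * bernoulli2 m j + m.choose (j+1) := by
  unfold bernoulli2
  rw [Finset.sum_range_succ' (fun q => (m+1).choose q)]
  simp only [Nat.choose_succ_succ]
  rw [Finset.sum_add_distrib]
  have h : ∑ q ∈ Finset.range (j+1), m.choose (q+1) + (m+1).choose 0
      = ∑ q ∈ Finset.range (j+1+1), m.choose q := by
    rw [Finset.sum_range_succ' (fun q => m.choose q)]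
    simp
  rw [Finset.sum_range_succ (fun q => m.choose q) (j+1)] at h
  simp only [Nat.succ_eq_add_one] at *
  omega

lemma spath_key (c : ℕ) (hc : 2 ≤ c) (m : ℕ) :
    Spath c (m+1) = 2 * Spath c m +
      ((if c ∣ (m+1) then 1 else 0) +
        ∑ k ∈ Finset.range (m/c + 1), (m-(c-1)*k).choose (m+1 - c*k)) := by
  have hc0 : 0 < c := by omega
  have H : ∑ k ∈ Finset.range (m/c + 1), bernoulli2 (m+1-(c-1)*k) (m+1-c*k)
      = 2 * Spath c m + ∑ k ∈ Finset.range (m/c + 1), (m-(c-1)*k).choose (m+1-c*k) := by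
    unfold Spath
    rw [Finset.mul_sum, ← Finset.sum_add_distrib]
    apply Finset.sum_congr rfl
    intro k hk
    rw [Finset.mem_range, Nat.lt_succ_iff] at hk
    have hck : c * k ≤ m := by
      rw [mul_comm]; exact (Nat.le_div_iff_mul_le hc0).mp hk
    have hck1 : (c-1) * k ≤ m := le_trans (Nat.mul_le_mul_right k (by omega)) hck
    rw [show m+1-(c-1)*k = (m-(c-1)*k)+1 from by omega,
        show m+1-c*k = (m-c*k)+1 from by omega, bern_pascal]
  have hs : Spath c (m+1)
      = ∑ k ∈ Finset.range ((m+1)/c + 1), bernoulli2 (m+1-(c-1)*k) (m+1-c*k) := rfl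
  rw [hs]
  by_cases hd : c ∣ (m+1)
  · have h3 : (m+1)/c = m/c + 1 := by rw [Nat.succ_div, if_pos hd]
    have h1 : (m/c + 1) * c = m + 1 := by
      rw [← h3, Nat.div_mul_cancel hd]
    have h0 : m + 1 - c * (m/c + 1) = 0 := by rw [mul_comm]; omega
    rw [h3, Finset.sum_range_succ, h0]
    have hb : bernoulli2 (m + 1 - (c-1) * (m/c + 1)) 0 = 1 := by simp [bernoulli2]
    rw [hb, H, if_pos hd]
    omega
  · have h3 : (m+1)/c = m/c := by rw [Nat.succ_div, if_neg hd, add_zero]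
    rw [h3, H, if_neg hd]
    omega

lemma lambda_D (c : ℕ) (hc : 2 ≤ c) (n : ℕ) (hn : 1 ≤ n) :
    lambda c n = (Dsum c n : ℤ) := by
  obtain ⟨m, rfl⟩ : ∃ m, n = m + 1 := ⟨n - 1, by omega⟩
  unfold lambda Dsum
  rw [spath_key c hc m]
  simp only [Nat.add_sub_cancel]
  push_cast
  ring

lemma D_small (c n : ℕ) (h1 : 1 ≤ n) (h2 : n < c) : Dsum c n = 0 := by
  unfold Dsum
  rw [if_neg (Nat.not_dvd_of_pos_of_lt h1 h2)]
  rw [Nat.div_eq_of_lt (by omega), Finset.sum_range_one]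
  simp [Nat.choose_eq_zero_of_lt (by omega : n - 1 < n)]

lemma D_F (c : ℕ) (hc : 2 ≤ c) (n : ℕ) (hn : c ≤ n) : Dsum c n = Fdiag c (n - c) := by
  obtain ⟨d, rfl⟩ : ∃ d, c = d + 2 := ⟨c - 2, by omega⟩
  have hc0 : 0 < d + 2 := by omega
  have hn1 : 1 ≤ n := by omega
  unfold Dsum
  simp only [show d + 2 - 1 = d + 1 from rfl]
  rw [Finset.sum_range_succ' (fun k => (n-1-(d+1)*k).choose (n - (d+2)*k))]
  have hf0 : (n-1-(d+1)*0).choose (n - (d+2)*0) = 0 := by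
    simp [Nat.choose_eq_zero_of_lt (by omega : n - 1 < n)]
  rw [hf0, add_zero]
  have hsum : ∑ k ∈ Finset.range ((n-1)/(d+2)), (n-1-(d+1)*(k+1)).choose (n - (d+2)*(k+1))
      = ∑ k ∈ Finset.range ((n-1)/(d+2)), ((n-(d+2)) - (d+1)*k).choose k := by
    apply Finset.sum_congr rfl
    intro k hk
    rw [Finset.mem_range] at hk
    have hk2 : (d+2) * (k+1) ≤ n - 1 := by
      rw [mul_comm]; exact (Nat.le_div_iff_mul_le hc0).mp hk
    have h1 : (d+1)*(k+1) = d*k+d+k+1 := by ring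
    have h2 : (d+2)*(k+1) = d*k+d+2*k+2 := by ring
    have h3 : (d+1)*k = d*k + k := by ring
    have hba : n - (d+2)*(k+1) ≤ n-1-(d+1)*(k+1) := by omega
    rw [← Nat.choose_symm hba,
        show n-1-(d+1)*(k+1) - (n - (d+2)*(k+1)) = k from by omega,
        show n-1-(d+1)*(k+1) = (n-(d+2)) - (d+1)*k from by omega]
  rw [hsum]
  have hdive : n / (d+2) = (n-(d+2))/(d+2) + 1 := by
    conv_lhs => rw [show n = (n-(d+2)) + (d+2) from by omega]
    rw [Nat.add_div_right _ hc0]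
  have hsd : n / (d+2) = (n-1)/(d+2) + if (d+2) ∣ n then 1 else 0 := by
    conv_lhs => rw [show n = (n-1) + 1 from by omega]
    rw [Nat.succ_div, Nat.sub_add_cancel hn1]
  unfold Fdiag
  simp only [show d + 2 - 1 = d + 1 from rfl]
  by_cases hd : (d+2) ∣ n
  · rw [if_pos hd] at hsd ⊢
    have he : (n-1)/(d+2) = (n-(d+2))/(d+2) := by omega
    rw [he, Finset.sum_range_succ]
    have hdc : (d+2) ∣ (n - (d+2)) := Nat.dvd_sub hd dvd_rfl
    have h1 : (d+2) * ((n-(d+2))/(d+2)) = n - (d+2) := Nat.mul_div_cancel' hdc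
    have habs : ∀ t, (d+2)*t = n-(d+2) → (n-(d+2)) - (d+1)*t = t := by
      intro t h
      have hm : (d+2)*t = (d+1)*t + t := by ring
      omega
    rw [habs _ h1, Nat.choose_self]
    omega
  · rw [if_neg hd] at hsd ⊢
    have he : (n-1)/(d+2) = (n-(d+2))/(d+2) + 1 := by omega
    rw [he]
    omega

lemma F_rec (c : ℕ) (hc : 2 ≤ c) (m : ℕ) (hm1 : 1 ≤ m) :
    Fdiag c m = Fdiag c (m-1) + (if c ≤ m then Fdiag c (m-c) else 0) := by
  obtain ⟨d, rfl⟩ : ∃ d, c = d + 2 := ⟨c - 2, by omega⟩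
  obtain ⟨t, rfl⟩ : ∃ t, m = t + 1 := ⟨m - 1, by omega⟩
  have hc0 : 0 < d+2 := by omega
  simp only [Nat.add_sub_cancel]
  set L := (t+1)/(d+2) with hL
  have hstart : Fdiag (d+2) (t+1)
      = ∑ j ∈ Finset.range L, ((t+1)-(d+1)*(j+1)).choose (j+1) + 1 := by
    unfold Fdiag
    simp only [show d+2-1 = d+1 from rfl]
    rw [Finset.sum_range_succ' (fun j => ((t+1)-(d+1)*j).choose j)]
    simp
    rfl
  have hbound : ∀ j, j < L → (d+2)*(j+1) ≤ t+1 := by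
    intro j hj
    rw [mul_comm]; exact (Nat.le_div_iff_mul_le hc0).mp (by omega)
  have hsplit : ∑ j ∈ Finset.range L, ((t+1)-(d+1)*(j+1)).choose (j+1)
      = ∑ j ∈ Finset.range L, (t-(d+1)*(j+1)).choose j
        + ∑ j ∈ Finset.range L, (t-(d+1)*(j+1)).choose (j+1) := by
    rw [← Finset.sum_add_distrib]
    apply Finset.sum_congr rfl
    intro j hj
    rw [Finset.mem_range] at hj
    have hb := hbound j hj
    have h1 : (d+1)*(j+1) = d*j+d+j+1 := by ring
    have h2 : (d+2)*(j+1) = d*j+d+2*j+2 := by ring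
    rw [show (t+1)-(d+1)*(j+1) = (t-(d+1)*(j+1))+1 from by omega, Nat.choose_succ_succ]
  have hPartA : ∑ j ∈ Finset.range L, (t-(d+1)*(j+1)).choose (j+1) + 1
      = ∑ j ∈ Finset.range (L+1), (t-(d+1)*j).choose j := by
    rw [Finset.sum_range_succ' (fun j => (t-(d+1)*j).choose j)]
    simp
  have hA : ∑ j ∈ Finset.range (L+1), (t-(d+1)*j).choose j = Fdiag (d+2) t := by
    unfold Fdiag
    simp only [show d+2-1 = d+1 from rfl]
    by_cases hdd : (d+2) ∣ (t+1)
    · have h3 : L = t/(d+2) + 1 := by rw [hL, Nat.succ_div, if_pos hdd]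
      have h1 : (d+2) * L = t+1 := by rw [hL, Nat.mul_div_cancel' hdd]
      rw [h3, Finset.sum_range_succ]
      rw [h3] at h1
      have habs : ∀ q : ℕ, (d+2)*(q+1) = t+1 → t - (d+1)*(q+1) < q+1 := by
        intro q h
        have hm2 : (d+2)*(q+1) = (d+1)*(q+1) + (q+1) := by ring
        omega
      have hz : (t-(d+1)*(t/(d+2)+1)).choose (t/(d+2)+1) = 0 :=
        Nat.choose_eq_zero_of_lt (habs _ h1)
      rw [hz, add_zero]
    · have h3 : L = t/(d+2) := by rw [hL, Nat.succ_div, if_neg hdd, add_zero]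
      rw [h3]
  have hB : ∑ j ∈ Finset.range L, (t-(d+1)*(j+1)).choose j
      = if d+2 ≤ t+1 then Fdiag (d+2) (t+1-(d+2)) else 0 := by
    by_cases hct : d+2 ≤ t+1
    · rw [if_pos hct]
      unfold Fdiag
      simp only [show d+2-1 = d+1 from rfl]
      have h4 : (t+1)/(d+2) = (t+1-(d+2))/(d+2) + 1 := by
        conv_lhs => rw [show t+1 = (t+1-(d+2)) + (d+2) from by omega]
        rw [Nat.add_div_right _ hc0]
      have h5 : (t+1-(d+2))/(d+2) + 1 = L := by rw [hL, h4]
      rw [h5]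
      apply Finset.sum_congr rfl
      intro j hj
      rw [Finset.mem_range] at hj
      have hb := hbound j hj
      have h1 : (d+1)*(j+1) = d*j+d+j+1 := by ring
      have h2 : (d+2)*(j+1) = d*j+d+2*j+2 := by ring
      have h3 : (d+1)*j = d*j+j := by ring
      rw [show t-(d+1)*(j+1) = (t+1-(d+2)) - (d+1)*j from by omega]
    · rw [if_neg hct]
      have hz : L = 0 := by rw [hL]; exact Nat.div_eq_of_lt (by omega)
      rw [hz]
      simp
  omega

theorem lambda_recurrence (c : ℕ) (hc : 2 ≤ c) :
    (∀ n, 1 ≤ n → n ≤ c - 1 → lambda c n = 0) ∧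
    lambda c c = 1 ∧
    (∀ n, c < n → lambda c n = lambda c (n - 1) + lambda c (n - c)) := by
  refine ⟨?_, ?_, ?_⟩
  · intro n h1 h2
    rw [lambda_D c hc n h1, D_small c n h1 (by omega)]
    norm_num
  · rw [lambda_D c hc c (by omega), D_F c hc c le_rfl, Nat.sub_self]
    simp [Fdiag]
  · intro n hn
    have h1 : lambda c n = (Fdiag c (n-c) : ℤ) := by
      rw [lambda_D c hc n (by omega), D_F c hc n (by omega)]
    have h2 : lambda c (n-1) = (Fdiag c (n-1-c) : ℤ) := by
      rw [lambda_D c hc (n-1) (by omega), D_F c hc (n-1) (by omega)]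
    have hrec := F_rec c hc (n-c) (by omega)
    by_cases h : c ≤ n - c
    · have h3 : lambda c (n-c) = (Fdiag c (n-c-c) : ℤ) := by
        rw [lambda_D c hc (n-c) (by omega), D_F c hc (n-c) h]
      rw [h1, h2, h3, show n-1-c = n-c-1 from by omega, hrec, if_pos h]
      push_cast
      ring
    · have h3 : lambda c (n-c) = 0 := by
        rw [lambda_D c hc (n-c) (by omega), D_small c (n-c) (by omega) (by omega)]
        norm_num
      rw [h1, h2, h3, show n-1-c = n-c-1 from by omega, hrec, if_neg h]
      push_cast
      ring
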